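/- Assume πU₂ < 1. Then, pointwise on the underlying probability space, B ≤ (1/(1 − πU₂))·( sup_{v∈[0,1/2]} |ε̃(v)| + sup_{v∈[0,1/2]} |ỹ(v)| ). (Lemma 3 of the paper.) -/

import Mathlib

open MeasureTheory ProbabilityTheory Complex Real

/-- `A_m := sup{ |sin(πν)|/(πν) : ν ∈ [m, m+1] }`. -/
noncomputable def sideLobeBound (m : ℕ) : ℝ :=
  ⨆ ν ∈ Set.Icc (m : ℝ) ((m : ℝ) + 1), |Real.sin (Real.pi * ν)| / (Real.pi * ν)

/-- `U₂ := Σ_{j=1}^{⌊(n−1)/(4g)⌋} A_{2jg−1}`. -/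
noncomputable def leakageU₂ (n g : ℕ) : ℝ :=
  ∑ j ∈ Finset.Icc (1 : ℤ) ⌊((n : ℝ) - 1) / (4 * g)⌋,
    sideLobeBound ((2 * j).toNat * g - 1)





lemma sideLobeBound_ge {m : ℕ} (hm : 1 ≤ m) :
    1 / (Real.pi * ((m : ℝ) + 1/2)) ≤ sideLobeBound m := by
  have hπ := Real.pi_pos
  have hm1 : (1:ℝ) ≤ (m:ℝ) := by exact_mod_cast hm
  set f : ℝ → ℝ := fun ν => |Real.sin (Real.pi * ν)| / (Real.pi * ν) with hf
  have hbd : ∀ ν ∈ Set.Icc (m:ℝ) ((m:ℝ)+1), f ν ≤ 1 / (Real.pi * m) := by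
    intro ν hν
    have hν1 : (1:ℝ) ≤ ν := le_trans hm1 hν.1
    have h1 : |Real.sin (Real.pi * ν)| ≤ 1 := Real.abs_sin_le_one _
    have h2 : Real.pi * (m:ℝ) ≤ Real.pi * ν := by nlinarith [hν.1]
    have h3 : 0 < Real.pi * (m:ℝ) := by nlinarith
    calc f ν ≤ 1 / (Real.pi * ν) := by
            apply div_le_div_of_nonneg_right ?_ ?_ |>.trans_eq rfl
            · exact h1
            · nlinarith
      _ ≤ 1 / (Real.pi * m) := by
            apply one_div_le_one_div_of_le h3 h2
  have hC0 : (0:ℝ) ≤ 1 / (Real.pi * m) := by positivity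
  have hbdd : BddAbove (Set.range fun ν => ⨆ (_ : ν ∈ Set.Icc (m:ℝ) ((m:ℝ)+1)), f ν) := by
    refine ⟨1 / (Real.pi * m), ?_⟩
    rintro x ⟨ν, rfl⟩
    exact Real.iSup_le (fun hν => hbd ν hν) hC0
  have hmem : (m:ℝ) + 1/2 ∈ Set.Icc (m:ℝ) ((m:ℝ)+1) := by
    constructor <;> norm_num
  have hsin : |Real.sin (Real.pi * ((m:ℝ) + 1/2))| = 1 := by
    have hx : Real.pi * ((m:ℝ) + 1/2) = (m:ℝ) * Real.pi + Real.pi/2 := by ring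
    have hcos : Real.cos (Real.pi * ((m:ℝ) + 1/2)) = 0 := by
      rw [hx, Real.cos_add, Real.cos_pi_div_two, Real.sin_pi_div_two,
        Real.sin_nat_mul_pi]
      ring
    have := Real.sin_sq_add_cos_sq (Real.pi * ((m:ℝ) + 1/2))
    rw [hcos] at this
    have h2 : Real.sin (Real.pi * ((m:ℝ) + 1/2)) ^ 2 = 1 := by nlinarith
    have := abs_nonneg (Real.sin (Real.pi * ((m:ℝ) + 1/2)))
    nlinarith [_root_.sq_abs (Real.sin (Real.pi * ((m:ℝ) + 1/2)))]
  have hval : f ((m:ℝ) + 1/2) = 1 / (Real.pi * ((m:ℝ) + 1/2)) := by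
    rw [hf]; simp only []; rw [hsin]
  calc 1 / (Real.pi * ((m:ℝ) + 1/2)) = f ((m:ℝ) + 1/2) := hval.symm
    _ ≤ ⨆ (_ : (m:ℝ) + 1/2 ∈ Set.Icc (m:ℝ) ((m:ℝ)+1)), f ((m:ℝ)+1/2) := by
        rw [ciSup_pos hmem]
    _ ≤ sideLobeBound m := le_ciSup_of_le hbdd ((m:ℝ)+1/2) le_rfl

lemma sideLobeBound_nonneg {m : ℕ} (hm : 1 ≤ m) : 0 ≤ sideLobeBound m := by
  have := sideLobeBound_ge hm
  have hπ := Real.pi_pos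
  have : (0:ℝ) < 1 / (Real.pi * ((m:ℝ) + 1/2)) := by positivity
  linarith [sideLobeBound_ge hm]



lemma abs_exp_mul_I_sub_one' (θ : ℝ) :
    norm (Complex.exp (θ * Complex.I) - 1) = 2 * |Real.sin (θ/2)| := by
  have h1 : Complex.exp (θ * Complex.I) - 1
      = ((Real.cos θ - 1 : ℝ) : ℂ) + ((Real.sin θ : ℝ) : ℂ) * Complex.I := by
    rw [Complex.exp_mul_I, ← Complex.ofReal_cos, ← Complex.ofReal_sin]
    push_cast
    ring
  rw [h1, Complex.norm_add_mul_I, Real.abs_sin_half]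
  rw [show ((Real.cos θ - 1)^2 + Real.sin θ ^2) = 4 * ((1 - Real.cos θ)/2) by
    nlinarith [Real.sin_sq_add_cos_sq θ]]
  rw [show (4 : ℝ) * ((1 - Real.cos θ)/2) = 2^2 * ((1 - Real.cos θ)/2) by norm_num]
  rw [Real.sqrt_mul (by norm_num), Real.sqrt_sq (by norm_num)]


lemma Kbound (n T : ℕ) (hn : 0 < n) (e : ℤ) (d : ℕ) (hd1 : 1 ≤ d) (hdT : d < T)
    (he : e = (d : ℤ) ∨ e = (d : ℤ) - T) :
    norm ((1/(n:ℂ)) * ∑ t : Fin n,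
        Complex.exp (2 * (Real.pi:ℂ) * Complex.I * (e:ℂ) * (((t:ℕ):ℂ)+1) / (T:ℂ)))
      ≤ (T:ℝ) / (2 * n * (min d (T - d))) := by
  have hT : 0 < T := lt_of_le_of_lt (Nat.zero_le d) hdT
  have hTR : (0:ℝ) < T := by exact_mod_cast hT
  have hTC : (T:ℂ) ≠ 0 := by exact_mod_cast hT.ne'
  have hnR : (0:ℝ) < n := by exact_mod_cast hn
  have hπ := Real.pi_pos
  set m : ℕ := min d (T - d) with hm
  have hm1 : 1 ≤ m := by omega
  have hm2 : 2 * m ≤ T := by omega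
  have hmR : (0:ℝ) < m := by exact_mod_cast hm1
  set θ : ℝ := 2 * Real.pi * e / T with hθ
  set z : ℂ := Complex.exp ((θ:ℂ) * Complex.I) with hz
  have hterm : ∀ t : Fin n,
      Complex.exp (2 * (Real.pi:ℂ) * Complex.I * (e:ℂ) * (((t:ℕ):ℂ)+1) / (T:ℂ))
        = z ^ ((t:ℕ)+1) := by
    intro t
    rw [hz, ← Complex.exp_nat_mul]
    congr 1
    push_cast [hθ]
    field_simp
  have hzabs : norm z = 1 := by
    rw [hz]; exact_mod_cast Complex.norm_exp_ofReal_mul_I θ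
  have hzne : z ≠ 1 := by
    intro hz1
    rw [hz, Complex.exp_eq_one_iff] at hz1
    obtain ⟨q, hq⟩ := hz1
    have hπC : ((Real.pi:ℝ):ℂ) ≠ 0 := by exact_mod_cast Real.pi_ne_zero
    have hq' : (θ:ℂ) = (q:ℂ) * (2 * (Real.pi:ℂ)) :=
      mul_right_cancel₀ Complex.I_ne_zero (by linear_combination hq)
    have hθC : ((θ:ℝ):ℂ) = 2 * ((Real.pi:ℝ):ℂ) * (e:ℂ) / (T:ℂ) := by
      rw [hθ]; push_cast; ring
    rw [hθC] at hq'
    have h3 : (e:ℂ) = (q:ℂ) * (T:ℂ) := by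
      have h4 : (e:ℂ) * (2 * ((Real.pi:ℝ):ℂ)) = (q:ℂ) * (T:ℂ) * (2 * ((Real.pi:ℝ):ℂ)) := by
        field_simp at hq'
        linear_combination (2 * ((Real.pi:ℝ):ℂ)) * hq'
      have h2π : (2 * ((Real.pi:ℝ):ℂ)) ≠ 0 := by simp [hπC]
      exact mul_right_cancel₀ h2π h4
    have heq : e = q * T := by exact_mod_cast h3
    have hTZ : (1:ℤ) ≤ (T:ℤ) := by exact_mod_cast hT
    have hdZ : (1:ℤ) ≤ (d:ℤ) := by exact_mod_cast hd1
    have hdTZ : (d:ℤ) < (T:ℤ) := by exact_mod_cast hdT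
    have key : ∀ r : ℤ, (d:ℤ) ≠ r * (T:ℤ) := by
      intro r hr
      rcases le_or_gt r 0 with h0 | h0
      · nlinarith [mul_nonpos_of_nonpos_of_nonneg h0 (by linarith : (0:ℤ) ≤ (T:ℤ))]
      · nlinarith [mul_le_mul_of_nonneg_right (by linarith : (1:ℤ) ≤ r) (by linarith : (0:ℤ) ≤ (T:ℤ))]
    rcases he with h | h <;> rw [h] at heq
    · exact key q heq
    · exact key (q+1) (by linarith [heq] ; )
  -- sin bound
  have hsin_half : |Real.sin (θ/2)| = Real.sin (Real.pi * m / T) := by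
    have hdle : (d:ℝ) ≤ T := by exact_mod_cast hdT.le
    have habs : |Real.sin (θ/2)| = |Real.sin (Real.pi * d / T)| := by
      rcases he with h | h
      · rw [hθ, h]; norm_num; ring_nf
      · rw [hθ, h]
        have : 2 * Real.pi * ((d:ℝ) - T) / T / 2 = Real.pi * d / T - Real.pi := by
          field_simp
        push_cast
        rw [this, Real.sin_sub_pi, abs_neg]
    rw [habs]
    rcases le_or_gt d (T - d) with hdd | hdd
    · have hmd : m = d := by omega
      rw [hmd]
      have h1 : 0 ≤ Real.pi * d / T := by positivity
      have h2 : Real.pi * d / T ≤ Real.pi := by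
        rw [div_le_iff₀ hTR]; nlinarith
      exact abs_of_nonneg (Real.sin_nonneg_of_nonneg_of_le_pi h1 h2)
    · have hmd : m = T - d := by omega
      have hcast : ((T - d : ℕ):ℝ) = (T:ℝ) - d := by
        push_cast [Nat.cast_sub hdT.le]; ring
      have heq2 : Real.pi * d / T = Real.pi - Real.pi * ((T-d:ℕ):ℝ) / T := by
        rw [hcast]; field_simp; ring
      rw [heq2, Real.sin_pi_sub, hmd]
      have h1 : 0 ≤ Real.pi * ((T-d:ℕ):ℝ) / T := by positivity
      have h2 : Real.pi * ((T-d:ℕ):ℝ) / T ≤ Real.pi := by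
        rw [div_le_iff₀ hTR]
        have : ((T-d:ℕ):ℝ) ≤ T := by rw [hcast]; linarith [show (0:ℝ) ≤ d by positivity]
        nlinarith
      exact abs_of_nonneg (Real.sin_nonneg_of_nonneg_of_le_pi h1 h2)
  have hsin_lb : 2 * (m:ℝ) / T ≤ Real.sin (Real.pi * m / T) := by
    have hx0 : 0 ≤ Real.pi * m / T := by positivity
    have hx2 : Real.pi * m / T ≤ Real.pi / 2 := by
      rw [div_le_div_iff₀ hTR (by norm_num : (0:ℝ) < 2)]
      have : (2:ℝ) * m ≤ T := by exact_mod_cast hm2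
      nlinarith
    have := Real.mul_le_sin hx0 hx2
    calc 2 * (m:ℝ) / T = 2 / Real.pi * (Real.pi * m / T) := by field_simp
      _ ≤ Real.sin (Real.pi * m / T) := this
  have hsin_pos : 0 < Real.sin (Real.pi * m / T) := lt_of_lt_of_le (by positivity) hsin_lb
  -- geometric sum
  have hsum : ∑ t : Fin n, z ^ ((t:ℕ)+1) = z * ((z^n - 1)/(z - 1)) := by
    rw [← geom_sum_eq hzne n, Finset.mul_sum]
    rw [Fin.sum_univ_eq_sum_range (fun i => z ^ (i+1))]
    apply Finset.sum_congr rfl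
    intro i _
    rw [pow_succ]; ring
  have hz1abs : norm (z - 1) = 2 * |Real.sin (θ/2)| := abs_exp_mul_I_sub_one' θ
  have habs2 : norm (∑ t : Fin n, z ^ ((t:ℕ)+1)) ≤ (T:ℝ) / (2*(m:ℝ)) := by
    rw [hsum, norm_mul, hzabs, one_mul, norm_div]
    have hnum : norm (z^n - 1) ≤ 2 := by
      have h5 := norm_sub_le (z^n) (1:ℂ)
      simp only [norm_pow, hzabs, one_pow, norm_one] at h5
      linarith [h5]
    have hden : norm (z - 1) = 2 * Real.sin (Real.pi * m / T) := by
      rw [hz1abs, hsin_half]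
    rw [hden, div_le_div_iff₀ (by positivity) (by positivity)]
    have hTs : (T:ℝ) * (2*(m:ℝ)/(T:ℝ)) = 2*(m:ℝ) := by field_simp
    nlinarith [mul_le_mul_of_nonneg_left hsin_lb hTR.le,
      mul_le_mul_of_nonneg_right hnum (by positivity : (0:ℝ) ≤ 2*(m:ℝ)), hTs]
  have hSrw : (∑ t : Fin n, Complex.exp (2 * (Real.pi:ℂ) * Complex.I * (e:ℂ) * (((t:ℕ):ℂ)+1) / (T:ℂ)))
      = ∑ t : Fin n, z ^ ((t:ℕ)+1) := Finset.sum_congr rfl (fun t _ => hterm t)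
  rw [hSrw, norm_mul]
  have habs1n : norm (1/(n:ℂ)) = 1/(n:ℝ) := by
    rw [norm_div, norm_one, Complex.norm_natCast]
  rw [habs1n, show (T:ℝ)/(2*(n:ℝ)*(m:ℝ)) = (1/(n:ℝ))*((T:ℝ)/(2*(m:ℝ))) by
    rw [div_mul_div_comm, one_mul]; congr 1; ring]
  exact mul_le_mul_of_nonneg_left habs2 (by positivity)

lemma step_bound {n g T m : ℕ} (hg : 2 ≤ g) (hm : 1 ≤ m) (hn : 2*g*T + 1 ≤ n)
    (hT : 1 ≤ T) :
    (T:ℝ) / (2*(n:ℝ)*(m:ℝ)) ≤ Real.pi/2 * sideLobeBound (2*m*g - 1) := by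
  have hπ := Real.pi_pos
  have ha : 1 ≤ 2*m*g - 1 := by
    have : 4 ≤ 2*m*g := by nlinarith
    omega
  have hcast : ((2*m*g - 1 : ℕ):ℝ) = 2*(m:ℝ)*(g:ℝ) - 1 := by
    have : 4 ≤ 2*m*g := by nlinarith
    push_cast [Nat.cast_sub (by omega : 1 ≤ 2*m*g)]
    ring
  have h1 := sideLobeBound_ge ha
  rw [hcast] at h1
  have hmR : (1:ℝ) ≤ m := by exact_mod_cast hm
  have hgR : (2:ℝ) ≤ g := by exact_mod_cast hg
  have hTR : (1:ℝ) ≤ T := by exact_mod_cast hT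
  have hnR : 2*(g:ℝ)*(T:ℝ) + 1 ≤ n := by exact_mod_cast hn
  have hA : Real.pi/2 * (1 / (Real.pi * ((2*(m:ℝ)*(g:ℝ) - 1) + 1/2)))
      ≤ Real.pi/2 * sideLobeBound (2*m*g - 1) := by
    apply mul_le_mul_of_nonneg_left h1 (by positivity)
  have hval : Real.pi/2 * (1 / (Real.pi * ((2*(m:ℝ)*(g:ℝ) - 1) + 1/2)))
      = 1 / (4*(m:ℝ)*(g:ℝ) - 1) := by
    have hπ' : Real.pi ≠ 0 := Real.pi_ne_zero
    calc Real.pi/2 * (1 / (Real.pi * ((2*(m:ℝ)*(g:ℝ) - 1) + 1/2)))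
        = Real.pi / (Real.pi * (2*((2*(m:ℝ)*(g:ℝ) - 1) + 1/2))) := by
          rw [mul_one_div]; rw [div_div]; congr 1; ring
      _ = (2*((2*(m:ℝ)*(g:ℝ) - 1) + 1/2))⁻¹ := div_mul_cancel_left₀ hπ' _
      _ = 1 / (4*(m:ℝ)*(g:ℝ) - 1) := by rw [← one_div]; congr 1; ring
  rw [hval] at hA
  refine le_trans ?_ hA
  rw [div_le_div_iff₀ (by nlinarith) (by nlinarith)]
  nlinarith

lemma sum_min_le (T : ℕ) (φ : ℕ → ℝ)
    (hφ : ∀ m, 1 ≤ m → m ≤ T/2 → 0 ≤ φ m) :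
    ∑ d ∈ Finset.Ioc 0 (T-1), φ (min d (T - d))
      ≤ 2 * ∑ m ∈ Finset.Ioc 0 (T/2), φ m := by
  rcases Nat.eq_zero_or_pos T with rfl | hT
  · simp
  set M := T/2 with hM
  have hsplit := Finset.sum_Ioc_consecutive (fun d => φ (min d (T-d)))
    (by omega : 0 ≤ M) (by omega : M ≤ T-1)
  rw [← hsplit]
  have h1 : ∑ d ∈ Finset.Ioc 0 M, φ (min d (T-d)) = ∑ m ∈ Finset.Ioc 0 M, φ m := by
    apply Finset.sum_congr rfl
    intro d hd
    rw [Finset.mem_Ioc] at hd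
    rw [Nat.min_eq_left (by omega)]
  have h2 : ∑ d ∈ Finset.Ioc M (T-1), φ (min d (T-d)) ≤ ∑ m ∈ Finset.Ioc 0 M, φ m := by
    have hre : ∑ d ∈ Finset.Ioc M (T-1), φ (min d (T-d))
        = ∑ m ∈ Finset.Ioc 0 (T-1-M), φ m := by
      apply Finset.sum_nbij' (fun d => T - d) (fun m => T - m)
      · intro a ha; rw [Finset.mem_Ioc] at *; omega
      · intro a ha; rw [Finset.mem_Ioc] at *; omega
      · intro a ha; rw [Finset.mem_Ioc] at ha; omega
      · intro a ha; rw [Finset.mem_Ioc] at ha; omega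
      · intro a ha; rw [Finset.mem_Ioc] at ha
        rw [Nat.min_eq_right (by omega)]
    rw [hre]
    apply Finset.sum_le_sum_of_subset_of_nonneg
    · intro x hx; rw [Finset.mem_Ioc] at *; omega
    · intro i hi _
      rw [Finset.mem_Ioc] at hi
      exact hφ i (by omega) (by omega)
  linarith

lemma sum_le_U₂ (n g T : ℕ) (hg : 2 ≤ g)
    (hMF : ((T/2 : ℕ):ℤ) ≤ ⌊((n:ℝ) - 1) / (4*(g:ℝ))⌋) :
    ∑ m ∈ Finset.Ioc 0 (T/2), sideLobeBound (2*m*g-1) ≤ leakageU₂ n g := by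
  rw [leakageU₂]
  have heq : ∑ m ∈ Finset.Ioc 0 (T/2), sideLobeBound (2*m*g-1)
      = ∑ j ∈ Finset.Icc (1:ℤ) ((T/2 : ℕ):ℤ), sideLobeBound ((2*j).toNat*g-1) := by
    refine Finset.sum_nbij' (i := fun m => (m:ℤ)) (j := fun j => j.toNat)
        ?_ ?_ ?_ ?_ ?_ <;>
      intro a ha <;> simp only [Finset.mem_Ioc, Finset.mem_Icc] at *
    · omega
    · omega
    · omega
    · omega
    · congr 2 <;> omega
  rw [heq]
  apply Finset.sum_le_sum_of_subset_of_nonneg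
  · exact Finset.Icc_subset_Icc_right hMF
  · intro j hj _
    rw [Finset.mem_Icc] at hj
    have h2j : 2 ≤ (2*j).toNat := by omega
    have h4 : 4 ≤ (2*j).toNat * g := Nat.mul_le_mul h2j hg
    exact sideLobeBound_nonneg (by omega)

set_option maxHeartbeats 2000000 in
/-- Lemma 3 of the paper: a data-driven upper bound on the largest present-frequency
magnitude `B`. If `πU₂ < 1`, then pointwise,
`B ≤ (1/(1 − πU₂)) (sup_{v∈[0,1/2]} |ε̃(v)| + sup_{v∈[0,1/2]} |ỹ(v)|)`. -/
theorem magnitude_data_driven_bound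
    {Ω : Type*} [MeasureSpace Ω] (hP : IsProbabilityMeasure (ℙ : Measure Ω))
    (n : ℕ) (hn : 0 < n) (σ : ℝ) (hσ : 0 < σ)
    (ε : Fin n → Ω → ℝ)
    (hmeas : ∀ t, Measurable (ε t))
    (hindep : iIndepFun ε ℙ)
    (hsubg : ∀ t (l : ℝ), ∫ ω, Real.exp (l * ε t ω) ∂ℙ ≤ Real.exp (σ ^ 2 * l ^ 2 / 2))
    (εdft : ℝ → Ω → ℂ)
    (hεdft : ∀ v ω, εdft v ω = (1 / (n : ℂ)) *
        ∑ t : Fin n, (ε t ω : ℂ) * Complex.exp (-(2 * Real.pi * Complex.I * v * ((t : ℕ) + 1))))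
    (g T : ℕ) (hg2 : 2 ≤ g) (hgn : Real.sqrt n ≤ g)
    (hT : 0 < T) (hTn : (T : ℝ) < n / (2 * g))
    (b : ℕ → ℂ)
    (hb0 : (b 0).im = 0)
    (hbconj : ∀ j, 1 ≤ j → j ≤ T - 1 → b j = starRingEnd ℂ (b (T - j)))
    (hbne : ∃ j < T, b j ≠ 0)
    (μ : ℕ → ℂ)
    (hμ : ∀ t, μ t = ∑ j ∈ Finset.range T,
        b j * Complex.exp (2 * Real.pi * Complex.I * j * t / T))
    (ydft : ℝ → Ω → ℂ)
    (hydft : ∀ v ω, ydft v ω = (1 / (n : ℂ)) *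
        ∑ t : Fin n, (μ ((t : ℕ) + 1) + (ε t ω : ℂ)) *
          Complex.exp (-(2 * Real.pi * Complex.I * v * ((t : ℕ) + 1))))
    (B : ℝ) (hB : IsGreatest {x : ℝ | ∃ j < T, b j ≠ 0 ∧ x = ‖b j‖} B)
    (hU₂ : Real.pi * leakageU₂ n g < 1) :
    ∀ ω : Ω, B ≤ (1 / (1 - Real.pi * leakageU₂ n g)) *
        ((⨆ v ∈ Set.Icc (0 : ℝ) (1 / 2), ‖εdft v ω‖) +
          ⨆ v ∈ Set.Icc (0 : ℝ) (1 / 2), ‖ydft v ω‖) := by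
  intro ω
  have hπ := Real.pi_pos
  have hnR : (0:ℝ) < n := by exact_mod_cast hn
  have hnC : (n:ℂ) ≠ 0 := by exact_mod_cast hn.ne'
  have hTC : (T:ℂ) ≠ 0 := by exact_mod_cast hT.ne'
  have hgR : (0:ℝ) < g := by exact_mod_cast (by omega : 0 < g)
  -- integer form of the separation hypothesis
  have hnN : 2*g*T + 1 ≤ n := by
    have h1 : (T:ℝ) * (2*(g:ℝ)) < n := (lt_div_iff₀ (by positivity)).mp
      (by rw [mul_comm (2:ℝ)] at hTn ⊢; exact hTn)
    have h2 : ((2*g*T : ℕ):ℝ) < (n:ℝ) := by push_cast; nlinarith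
    have := Nat.cast_lt (α := ℝ).mp h2
    omega
  -- U₂ is nonnegative
  have hU₂0 : 0 ≤ leakageU₂ n g := by
    rw [leakageU₂]
    apply Finset.sum_nonneg
    intro j hj
    rw [Finset.mem_Icc] at hj
    have h2j : 2 ≤ (2*j).toNat := by omega
    have h4 : 4 ≤ (2*j).toNat * g := Nat.mul_le_mul h2j hg2
    exact sideLobeBound_nonneg (by omega)
  -- choose the witness frequency in [0, 1/2]
  obtain ⟨js, hjsT, hbjs, hBjs⟩ := hB.1
  have hBpos : 0 ≤ B := by rw [hBjs]; exact norm_nonneg _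
  obtain ⟨j', hj'T, hbj', hBj', hj'2⟩ :
      ∃ j', j' < T ∧ b j' ≠ 0 ∧ norm (b j') = B ∧ 2*j' ≤ T := by
    rcases le_or_gt (2*js) T with h | h
    · exact ⟨js, hjsT, hbjs, hBjs.symm, h⟩
    · have hjs1 : 1 ≤ js := by omega
      have hcc := hbconj js hjs1 (by omega)
      refine ⟨T - js, by omega, ?_, ?_, by omega⟩
      · intro h0
        rw [h0] at hcc
        simp at hcc
        exact hbjs hcc
      · rw [hBjs, hcc, Complex.norm_conj]
  set v : ℝ := (j':ℝ)/T with hv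
  have hvmem : v ∈ Set.Icc (0:ℝ) (1/2) := by
    constructor
    · positivity
    · rw [hv, div_le_div_iff₀ (by exact_mod_cast hT) (by norm_num : (0:ℝ) < 2)]
      have : (2:ℝ)*j' ≤ T := by exact_mod_cast hj'2
      linarith
  have hvC : ((v:ℝ):ℂ) = (j':ℂ)/(T:ℂ) := by rw [hv]; push_cast; ring
  -- the Dirichlet kernel values
  set K : ℕ → ℂ := fun k => (1/(n:ℂ)) * ∑ t : Fin n,
    Complex.exp (2 * (Real.pi:ℂ) * Complex.I * ((((k:ℤ) - (j':ℤ)):ℤ):ℂ)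
      * (((t:ℕ):ℂ)+1) / (T:ℂ)) with hK
  -- the key identity
  have hid : ydft v ω - εdft v ω = ∑ k ∈ Finset.range T, b k * K k := by
    rw [hydft, hεdft, ← mul_sub, ← Finset.sum_sub_distrib]
    have hstep1 : ∀ t : Fin n,
        (μ ((t:ℕ)+1) + ((ε t ω : ℝ):ℂ)) *
            Complex.exp (-(2 * (Real.pi:ℂ) * Complex.I * ((v:ℝ):ℂ) * (((t:ℕ):ℂ)+1)))
          - ((ε t ω : ℝ):ℂ) *
            Complex.exp (-(2 * (Real.pi:ℂ) * Complex.I * ((v:ℝ):ℂ) * (((t:ℕ):ℂ)+1)))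
        = ∑ k ∈ Finset.range T,
            b k * Complex.exp (2 * (Real.pi:ℂ) * Complex.I * ((((k:ℤ) - (j':ℤ)):ℤ):ℂ)
              * (((t:ℕ):ℂ)+1) / (T:ℂ)) := by
      intro t
      have hL : (μ ((t:ℕ)+1) + ((ε t ω : ℝ):ℂ)) *
            Complex.exp (-(2 * (Real.pi:ℂ) * Complex.I * ((v:ℝ):ℂ) * (((t:ℕ):ℂ)+1)))
          - ((ε t ω : ℝ):ℂ) *
            Complex.exp (-(2 * (Real.pi:ℂ) * Complex.I * ((v:ℝ):ℂ) * (((t:ℕ):ℂ)+1)))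
          = μ ((t:ℕ)+1) *
            Complex.exp (-(2 * (Real.pi:ℂ) * Complex.I * ((v:ℝ):ℂ) * (((t:ℕ):ℂ)+1))) := by
        ring
      rw [hL, hμ ((t:ℕ)+1), Finset.sum_mul]
      refine Finset.sum_congr rfl ?_
      intro k _
      rw [mul_assoc, ← Complex.exp_add]
      congr 1
      rw [hvC]
      push_cast
      field_simp
      ring
    rw [Finset.sum_congr rfl (fun t _ => hstep1 t), Finset.sum_comm, Finset.mul_sum]
    refine Finset.sum_congr rfl ?_
    intro k _
    rw [hK]
    dsimp only
    rw [← Finset.mul_sum]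
    ring
  have hKj' : K j' = 1 := by
    rw [hK]
    simp only [sub_self, Int.cast_zero, mul_zero, zero_mul, zero_div, Complex.exp_zero]
    rw [Finset.sum_const, Finset.card_univ, Fintype.card_fin, nsmul_eq_mul, mul_one]
    field_simp
  have hdec : b j' = (ydft v ω - εdft v ω)
      - ∑ k ∈ (Finset.range T).erase j', b k * K k := by
    rw [hid, ← Finset.add_sum_erase _ _ (Finset.mem_range.mpr hj'T), hKj', mul_one]
    ring
  -- off-frequency kernel bounds
  set dk : ℕ → ℕ := fun k => if j' < k then k - j' else k + T - j' with hdk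
  have hKb : ∀ k ∈ (Finset.range T).erase j', norm (K k)
      ≤ Real.pi/2 * sideLobeBound (2 * (min (dk k) (T - dk k)) * g - 1) := by
    intro k hk
    rw [Finset.mem_erase, Finset.mem_range] at hk
    have hd1 : 1 ≤ dk k := by simp only [hdk]; split_ifs <;> omega
    have hdT : dk k < T := by simp only [hdk]; split_ifs <;> omega
    have he : ((k:ℤ) - (j':ℤ)) = ((dk k : ℕ):ℤ) ∨
        ((k:ℤ) - (j':ℤ)) = ((dk k : ℕ):ℤ) - (T:ℤ) := by
      simp only [hdk]; split_ifs with h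
      · left; push_cast; omega
      · right; push_cast; omega
    have h1 := Kbound n T hn ((k:ℤ) - (j':ℤ)) (dk k) hd1 hdT he
    have h2 := step_bound (n := n) (g := g) (T := T)
      (m := min (dk k) (T - dk k)) hg2 (by omega) hnN (by omega)
    refine le_trans ?_ h2
    rw [hK]
    exact h1
  -- sum of off-frequency contributions
  have hsumK : ∑ k ∈ (Finset.range T).erase j',
      norm (b k) * norm (K k) ≤ B * (Real.pi * leakageU₂ n g) := by
    have hbk : ∀ k ∈ (Finset.range T).erase j', norm (b k) ≤ B := by
      intro k hk
      rw [Finset.mem_erase, Finset.mem_range] at hk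
      by_cases hbk0 : b k = 0
      · rw [hbk0]; simpa using hBpos
      · exact hB.2 ⟨k, hk.2, hbk0, rfl⟩
    have hMF : ((T/2 : ℕ):ℤ) ≤ ⌊((n:ℝ) - 1) / (4*(g:ℝ))⌋ := by
      rw [Int.le_floor]
      have h1 : ((T/2:ℕ):ℝ) ≤ (T:ℝ)/2 := Nat.cast_div_le
      have h2 : 2*(g:ℝ)*(T:ℝ) + 1 ≤ (n:ℝ) := by exact_mod_cast hnN
      rw [show (((T/2:ℕ):ℤ):ℝ) = ((T/2:ℕ):ℝ) by norm_cast, le_div_iff₀ (by positivity)]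
      nlinarith
    have hnonneg : ∀ m : ℕ, 1 ≤ m → 0 ≤ sideLobeBound (2*m*g-1) := by
      intro m hm
      have h4 : 4 ≤ 2*m*g := Nat.mul_le_mul (by omega : 2 ≤ 2*m) hg2
      exact sideLobeBound_nonneg (by omega)
    calc ∑ k ∈ (Finset.range T).erase j', norm (b k) * norm (K k)
        ≤ ∑ k ∈ (Finset.range T).erase j',
            B * (Real.pi/2 * sideLobeBound (2 * (min (dk k) (T - dk k)) * g - 1)) := by
          refine Finset.sum_le_sum ?_
          intro k hk
          have hA0 : 0 ≤ Real.pi/2 * sideLobeBound (2 * (min (dk k) (T - dk k)) * g - 1) :=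
            le_trans (norm_nonneg _) (hKb k hk)
          exact mul_le_mul (hbk k hk) (hKb k hk) (norm_nonneg _) hBpos
      _ = B * (Real.pi/2) * ∑ k ∈ (Finset.range T).erase j',
            sideLobeBound (2 * (min (dk k) (T - dk k)) * g - 1) := by
          rw [Finset.mul_sum]
          exact Finset.sum_congr rfl fun k _ => by ring
      _ ≤ B * (Real.pi/2) * (2 * ∑ m ∈ Finset.Ioc 0 (T/2), sideLobeBound (2*m*g-1)) := by
          refine mul_le_mul_of_nonneg_left ?_ (by positivity)
          have hre : ∑ k ∈ (Finset.range T).erase j',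
              sideLobeBound (2 * (min (dk k) (T - dk k)) * g - 1)
              = ∑ d ∈ Finset.Ioc 0 (T-1), sideLobeBound (2 * (min d (T - d)) * g - 1) := by
            refine Finset.sum_nbij' (i := fun k => dk k)
              (j := fun d => if j' + d < T then j' + d else j' + d - T) ?_ ?_ ?_ ?_ ?_ <;>
              intro a ha <;>
              simp only [Finset.mem_erase, Finset.mem_range, Finset.mem_Ioc, hdk] at *
            · split_ifs <;> omega
            · split_ifs <;> omega
            · split_ifs <;> omega
            · split_ifs <;> omega
          rw [hre]
          exact sum_min_le T _ (fun m hm1 _ => hnonneg m hm1)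
      _ ≤ B * (Real.pi/2) * (2 * leakageU₂ n g) := by
          refine mul_le_mul_of_nonneg_left ?_ (by positivity)
          have := sum_le_U₂ n g T hg2 hMF
          linarith
      _ = B * (Real.pi * leakageU₂ n g) := by ring
  -- from decomposition
  have habsb : norm (b j') ≤ norm (ydft v ω) + norm (εdft v ω)
      + B * (Real.pi * leakageU₂ n g) := by
    have h1 : norm (b j') ≤ norm (ydft v ω - εdft v ω)
        + ∑ k ∈ (Finset.range T).erase j', norm (b k) * norm (K k) := by
      rw [hdec]
      refine le_trans ?_ (add_le_add_right
        (le_of_eq (Finset.sum_congr rfl (fun k _ => (norm_mul _ _)))) _)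
      calc norm ((ydft v ω - εdft v ω) - ∑ k ∈ (Finset.range T).erase j', b k * K k)
          ≤ norm (ydft v ω - εdft v ω)
            + norm (∑ k ∈ (Finset.range T).erase j', b k * K k) := by
            simpa [sub_eq_add_neg] using norm_add_le (ydft v ω - εdft v ω)
              (-(∑ k ∈ (Finset.range T).erase j', b k * K k))
        _ ≤ norm (ydft v ω - εdft v ω)
            + ∑ k ∈ (Finset.range T).erase j', norm (b k * K k) :=
            add_le_add_right (norm_sum_le _ _) _
    have h2 : norm (ydft v ω - εdft v ω)
        ≤ norm (ydft v ω) + norm (εdft v ω) := by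
      simpa [sub_eq_add_neg] using norm_add_le (ydft v ω) (-(εdft v ω))
    linarith
  -- sup bounds
  have habs1n : norm (1/(n:ℂ)) = 1/(n:ℝ) := by
    rw [norm_div, norm_one, Complex.norm_natCast]
  have habsexp : ∀ (u : ℝ) (t : Fin n),
      norm (Complex.exp (-(2 * (Real.pi:ℂ) * Complex.I * (u:ℂ) * (((t:ℕ):ℂ)+1)))) = 1 := by
    intro u t
    have he : -(2 * (Real.pi:ℂ) * Complex.I * (u:ℂ) * (((t:ℕ):ℂ)+1))
        = ((-(2 * Real.pi * u * ((t:ℕ)+1)) : ℝ) : ℂ) * Complex.I := by push_cast; ring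
    rw [he, Complex.norm_exp_ofReal_mul_I]
  have hsup_le : ∀ (f : ℝ → ℂ) (C : ℝ), 0 ≤ C →
      (∀ u ∈ Set.Icc (0:ℝ) (1/2), norm (f u) ≤ C) →
      norm (f v) ≤ ⨆ u ∈ Set.Icc (0:ℝ) (1/2), norm (f u) := by
    intro f C hC hptf
    refine le_ciSup_of_le ⟨C, ?_⟩ v ?_
    · rintro x ⟨u, rfl⟩
      exact Real.iSup_le (fun hu => hptf u hu) hC
    · rw [ciSup_pos hvmem]
  have hεsup : norm (εdft v ω)
      ≤ ⨆ u ∈ Set.Icc (0:ℝ) (1/2), norm (εdft u ω) := by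
    refine hsup_le (fun u => εdft u ω) (∑ t : Fin n, |ε t ω|) ?_ ?_
    · positivity
    · intro u _
      rw [hεdft, norm_mul, habs1n]
      have hsum : norm (∑ t : Fin n, (ε t ω : ℂ) *
          Complex.exp (-(2 * (Real.pi:ℂ) * Complex.I * (u:ℂ) * (((t:ℕ):ℂ)+1))))
          ≤ ∑ t : Fin n, |ε t ω| := by
        refine le_trans (norm_sum_le _ _) ?_
        refine le_of_eq (Finset.sum_congr rfl ?_)
        intro t _
        rw [norm_mul, Complex.norm_real, Real.norm_eq_abs, habsexp, mul_one]
      have h1 : 1/(n:ℝ) ≤ 1 := by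
        rw [div_le_one hnR]; exact_mod_cast hn
      have h0 : (0:ℝ) ≤ ∑ t : Fin n, |ε t ω| := by positivity
      nlinarith [norm_nonneg (∑ t : Fin n, (ε t ω : ℂ) *
          Complex.exp (-(2 * (Real.pi:ℂ) * Complex.I * (u:ℂ) * (((t:ℕ):ℂ)+1))))]
  have hysup : norm (ydft v ω)
      ≤ ⨆ u ∈ Set.Icc (0:ℝ) (1/2), norm (ydft u ω) := by
    refine hsup_le (fun u => ydft u ω) (∑ t : Fin n, (norm (μ ((t:ℕ)+1)) + |ε t ω|)) ?_ ?_
    · exact Finset.sum_nonneg fun t _ => add_nonneg (norm_nonneg _) (abs_nonneg _)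
    · intro u _
      rw [hydft, norm_mul, habs1n]
      have hsum : norm (∑ t : Fin n, (μ ((t:ℕ)+1) + (ε t ω : ℂ)) *
          Complex.exp (-(2 * (Real.pi:ℂ) * Complex.I * (u:ℂ) * (((t:ℕ):ℂ)+1))))
          ≤ ∑ t : Fin n, (norm (μ ((t:ℕ)+1)) + |ε t ω|) := by
        refine le_trans (norm_sum_le _ _) ?_
        refine Finset.sum_le_sum ?_
        intro t _
        rw [norm_mul, habsexp, mul_one]
        refine le_trans (norm_add_le _ _) ?_
        rw [Complex.norm_real, Real.norm_eq_abs]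
      have h1 : 1/(n:ℝ) ≤ 1 := by
        rw [div_le_one hnR]; exact_mod_cast hn
      have h0 : (0:ℝ) ≤ ∑ t : Fin n, (norm (μ ((t:ℕ)+1)) + |ε t ω|) :=
        Finset.sum_nonneg fun t _ => add_nonneg (norm_nonneg _) (abs_nonneg _)
      nlinarith [norm_nonneg (∑ t : Fin n, (μ ((t:ℕ)+1) + (ε t ω : ℂ)) *
          Complex.exp (-(2 * (Real.pi:ℂ) * Complex.I * (u:ℂ) * (((t:ℕ):ℂ)+1))))]
  -- conclude
  set P := Real.pi * leakageU₂ n g with hP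
  set Sε := ⨆ u ∈ Set.Icc (0:ℝ) (1/2), norm (εdft u ω) with hSε
  set Sy := ⨆ u ∈ Set.Icc (0:ℝ) (1/2), norm (ydft u ω) with hSy
  have hfin : B ≤ Sε + Sy + P*B := by
    calc B = norm (b j') := hBj'.symm
      _ ≤ norm (ydft v ω) + norm (εdft v ω) + B*P := habsb
      _ ≤ Sy + Sε + B*P := add_le_add (add_le_add hysup hεsup) le_rfl
      _ = Sε + Sy + P*B := by ring
  have h1P : 0 < 1 - P := by linarith [hU₂]
  rw [div_mul_eq_mul_div, one_mul, le_div_iff₀ h1P]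
  nlinarith [hfin]
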